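/- There exists a coherent commutative ring R and a multiplicative subset S of R such that the class of S-flat R-modules is not closed under direct products; concretely, for a valuation domain R with value group ℤ × ℤ (lexicographic), x of value (0,1), and S = {xⁱ : i ≥ 0}, each R/xⁱR is S-flat (indeed (R/xⁱR)_S = 0) but the product ∏_{i≥1} R/xⁱR is not S-flat. -/

import Mathlib

/-- The lexicographic order on `ℤ × ℤ`. -/
def lexLe (a b : ℤ × ℤ) : Prop := a.1 < b.1 ∨ (a.1 = b.1 ∧ a.2 ≤ b.2)

open scoped TensorProduct in
lemma flat_isSMulRegular {A M : Type*} [CommRing A] [IsDomain A] [AddCommGroup M]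
    [Module A M] [Module.Flat A M] {a : A} (ha : a ≠ 0) : IsSMulRegular M a := by
  have hA : IsSMulRegular A a := fun b c h => by
    have : a * b = a * c := by simpa [smul_eq_mul] using h
    exact mul_left_cancel₀ ha this
  have h2 : IsSMulRegular (M ⊗[A] A) a := hA.lTensor M
  exact ((TensorProduct.rid A M).toEquiv.isSMulRegular_congr
    (fun m => map_smul (TensorProduct.rid A M) a m)).mp h2

lemma fp_span_singleton {R : Type*} [CommRing R] [IsDomain R] (a : R) :
    Module.FinitePresentation R (Ideal.span {a}) := by
  have hmem : ∀ r : R, (LinearMap.toSpanSingleton R R a) r ∈ Ideal.span {a} := fun r => by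
    rw [LinearMap.toSpanSingleton_apply]
    exact Submodule.smul_mem _ r (Ideal.subset_span rfl)
  refine Module.finitePresentation_of_surjective
    ((LinearMap.toSpanSingleton R R a).codRestrict
      ((Ideal.span {a}).restrictScalars R) hmem) ?_ ?_
  · rintro ⟨b, hb⟩
    obtain ⟨c, rfl⟩ := Ideal.mem_span_singleton.mp hb
    exact ⟨c, Subtype.ext (by
      simp only [LinearMap.codRestrict_apply, LinearMap.toSpanSingleton_apply, smul_eq_mul]
      exact mul_comm c a)⟩
  · erw [LinearMap.ker_codRestrict]
    by_cases h0 : a = 0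
    · have : LinearMap.ker (LinearMap.toSpanSingleton R R a) = ⊤ := by
        ext r; simp [LinearMap.toSpanSingleton_apply, h0]
      rw [this]; exact Module.Finite.fg_top
    · have : LinearMap.ker (LinearMap.toSpanSingleton R R a) = ⊥ := by
        ext r
        simp only [LinearMap.mem_ker, LinearMap.toSpanSingleton_apply,
          Submodule.mem_bot, smul_eq_mul]
        constructor
        · intro h; rcases mul_eq_zero.mp h with h | h
          · exact h
          · exact absurd h h0
        · rintro rfl; simp
      rw [this]; exact Submodule.fg_bot

/-- There is a coherent ring `R` with a multiplicative set `S` such that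
`S`-flat modules are not closed under products: for a valuation domain `R` with value
group `ℤ × ℤ` (lex), `x` of value `(0,1)` and `S = {xⁱ}`, the ring `R` is coherent,
each `R/xⁱR` is `S`-flat (indeed `(R/xⁱR)_S = 0`), but `∏_{i ≥ 1} R/xⁱR` is not
`S`-flat. -/
theorem stmt10 {R : Type*} [CommRing R] [IsDomain R] [ValuationRing R]
    (v : R → ℤ × ℤ)
    (hdvd : ∀ a b : R, a ≠ 0 → b ≠ 0 → (a ∣ b ↔ lexLe (v a) (v b)))
    (hmul : ∀ a b : R, a ≠ 0 → b ≠ 0 → v (a * b) = v a + v b)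
    (x y : R) (hx : x ≠ 0) (hy : y ≠ 0)
    (hvx : v x = (0, 1)) (hvy : v y = (1, 0)) :
    (∀ I : Ideal R, I.FG → Module.FinitePresentation R I) ∧
    (∀ i : ℕ,
      Subsingleton (LocalizedModule (Submonoid.powers x) (R ⧸ Ideal.span {x ^ (i + 1)})) ∧
      Module.Flat (Localization (Submonoid.powers x))
        (LocalizedModule (Submonoid.powers x) (R ⧸ Ideal.span {x ^ (i + 1)}))) ∧
    ¬ Module.Flat (Localization (Submonoid.powers x))
        (LocalizedModule (Submonoid.powers x) (∀ i : ℕ, R ⧸ Ideal.span {x ^ (i + 1)})) := by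
  -- basic value computations
  have hv1 : v 1 = 0 := by
    have h := hmul 1 x one_ne_zero hx
    rw [one_mul] at h
    exact right_eq_add.mp h
  have hvpow : ∀ n : ℕ, v (x ^ n) = (0, (n : ℤ)) := by
    intro n
    induction n with
    | zero => simp only [pow_zero, Nat.cast_zero]; exact hv1
    | succ n ih =>
      have h := hmul (x ^ n) x (pow_ne_zero n hx) hx
      rw [← pow_succ] at h
      rw [h, ih, hvx, Prod.mk_add_mk]
      norm_num
  refine ⟨?_, ?_, ?_⟩
  · -- coherence: f.g. ideals are finitely presented
    intro I hI
    obtain ⟨a, rfl⟩ :=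
      (IsBezout.isPrincipal_of_FG I hI).principal
    exact fp_span_singleton a
  · -- each quotient localizes to zero
    intro i
    have hs : ∀ m : R ⧸ Ideal.span {x ^ (i + 1)}, (x ^ (i + 1)) • m = 0 := by
      intro m
      obtain ⟨r, rfl⟩ := Ideal.Quotient.mk_surjective m
      have : (x ^ (i + 1)) • (Ideal.Quotient.mk (Ideal.span {x ^ (i + 1)}) r) =
          Ideal.Quotient.mk (Ideal.span {x ^ (i + 1)}) (x ^ (i + 1) * r) := rfl
      rw [this]
      exact Ideal.Quotient.eq_zero_iff_mem.mpr
        (Ideal.mul_mem_right r _ (Ideal.subset_span rfl))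
    have hsub : Subsingleton
        (LocalizedModule (Submonoid.powers x) (R ⧸ Ideal.span {x ^ (i + 1)})) := by
      constructor
      intro z w
      induction z using LocalizedModule.induction_on with
      | h m s =>
        induction w using LocalizedModule.induction_on with
        | h m' s' =>
          rw [LocalizedModule.mk_eq]
          refine ⟨⟨x ^ (i + 1), i + 1, rfl⟩, ?_⟩
          show (x ^ (i + 1) : R) • (s' • m) = (x ^ (i + 1) : R) • (s • m')
          rw [hs, hs]
    refine ⟨hsub, ?_⟩
    exact Module.Flat.of_linearEquiv
      (LinearEquiv.ofSubsingleton (R := Localization (Submonoid.powers x)) _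
        (Fin 0 → Localization (Submonoid.powers x)))
  · -- the product is not S-flat
    intro hflat
    set S := Submonoid.powers x with hS
    set A := Localization S with hA
    have hSle : S ≤ nonZeroDivisors R := powers_le_nonZeroDivisors_of_noZeroDivisors hx
    have : IsDomain A := IsLocalization.isDomain_localization hSle
    have hy' : algebraMap R A y ≠ 0 :=
      IsLocalization.to_map_ne_zero_of_mem_nonZeroDivisors A hSle
        (mem_nonZeroDivisors_of_ne_zero hy)
    set M := LocalizedModule S (∀ i : ℕ, R ⧸ Ideal.span {x ^ (i + 1)}) with hM
    haveI := hflat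
    have hreg : IsSMulRegular M (algebraMap R A y) := flat_isSMulRegular (M := M) hy'
    -- the element (1, 1, 1, ...)
    set m : ∀ i : ℕ, R ⧸ Ideal.span {x ^ (i + 1)} :=
      fun i => Ideal.Quotient.mk _ 1 with hm
    have hym : y • m = 0 := by
      funext i
      have hdy : x ^ (i + 1) ∣ y := by
        rw [hdvd _ _ (pow_ne_zero _ hx) hy, hvpow, hvy]
        exact Or.inl (by norm_num)
      show y • (Ideal.Quotient.mk (Ideal.span {x ^ (i + 1)}) (1 : R)) = 0
      have : y • (Ideal.Quotient.mk (Ideal.span {x ^ (i + 1)}) (1 : R)) =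
          Ideal.Quotient.mk (Ideal.span {x ^ (i + 1)}) (y * 1) := rfl
      rw [this, mul_one]
      exact Ideal.Quotient.eq_zero_iff_mem.mpr (Ideal.mem_span_singleton.mpr hdy)
    have hz0 : (algebraMap R A y) • (LocalizedModule.mk m 1 : M) = (algebraMap R A y) • 0 := by
      rw [smul_zero, algebraMap_smul, LocalizedModule.smul'_mk, hym]
      exact LocalizedModule.zero_mk 1
    have hz := hreg hz0
    -- but mk m 1 ≠ 0
    rw [show (0 : M) = LocalizedModule.mk 0 1 from (LocalizedModule.zero_mk 1).symm,
      LocalizedModule.mk_eq] at hz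
    obtain ⟨u, hu⟩ := hz
    obtain ⟨n, hn⟩ := u.2
    have hu' : (u : R) • m = 0 := by
      simpa [Submonoid.smul_def] using hu
    have hxn : (u : R) • (m n) = 0 := by
      simpa using congrFun hu' n
    rw [← hn] at hxn
    rw [hm] at hxn
    have hxn' : Ideal.Quotient.mk (Ideal.span {x ^ (n + 1)}) (x ^ n * 1) = 0 := hxn
    rw [mul_one] at hxn'
    have hdvd' : x ^ (n + 1) ∣ x ^ n :=
      Ideal.mem_span_singleton.mp (Ideal.Quotient.eq_zero_iff_mem.mp hxn')
    rw [hdvd _ _ (pow_ne_zero _ hx) (pow_ne_zero _ hx), hvpow, hvpow] at hdvd'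
    rcases hdvd' with h | h
    · exact absurd h (by norm_num)
    · have := h.2
      push_cast at this
      omega
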